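/- Every bipartite graph is an induced subgraph of some bipartite square-complementary graph. -/

import Mathlib

open SimpleGraph

/-- The square of a graph: two distinct vertices are adjacent iff they are at
distance at most 2 in `G`, i.e. adjacent or having a common neighbor. -/
def SimpleGraph.square {V : Type*} (G : SimpleGraph V) : SimpleGraph V where
  Adj u v := u ≠ v ∧ (G.Adj u v ∨ ∃ w, G.Adj u w ∧ G.Adj w v)
  symm := by
    constructor
    rintro u v ⟨h, h' | ⟨w, hw1, hw2⟩⟩
    · exact ⟨h.symm, Or.inl h'.symm⟩
    · exact ⟨h.symm, Or.inr ⟨w, hw2.symm, hw1.symm⟩⟩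
  loopless := ⟨by rintro v ⟨h, -⟩; exact h rfl⟩

/-- A graph is square-complementary (squco) if its square is isomorphic to its
complement. -/
def SimpleGraph.IsSquco {V : Type*} (G : SimpleGraph V) : Prop :=
  Nonempty (G.square ≃g Gᶜ)

/-- `{A, B}` is a bipartition of `G`: the two sets partition the vertex set and
every edge of `G` joins a vertex of `A` to a vertex of `B`. -/
def SimpleGraph.IsBipartitionOf {V : Type*} (G : SimpleGraph V) (A B : Set V) : Prop :=
  (∀ v, v ∈ A ↔ v ∉ B) ∧ ∀ ⦃u v⦄, G.Adj u v → (u ∈ A ∧ v ∈ B) ∨ (u ∈ B ∧ v ∈ A)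

namespace SqucoAux

/-- Fano plane incidence matrix: rows = lines, columns = points. -/
def gg : Fin 7 → Fin 7 → Bool := fun e c =>
  ![ ![true,true,true,false,false,false,false],
     ![true,false,false,true,true,false,false],
     ![true,false,false,false,false,true,true],
     ![false,true,false,true,false,true,false],
     ![false,true,false,false,true,false,true],
     ![false,false,true,true,false,false,true],
     ![false,false,true,false,true,true,false] ] e c

/-- flag on extra B-side vertices (points): membership in line 0. -/
def ga : Fin 7 → Bool := ![true,true,true,false,false,false,false]

/-- flag on extra A-side vertices (lines): containing point 0. -/
def gb : Fin 7 → Bool := fun e => gg e 0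

theorem hA1 : ∀ e, ∃ c, ga c = true ∧ gg e c = true := by decide
theorem hA2 : ∀ e, ∃ c, ¬(ga c = true) ∧ ¬(gg e c = true) := by decide
theorem hA3 : ∀ e e', ∃ c, gg e c = true ∧ gg e' c = true := by decide
theorem hA4 : ∀ e e', ∃ c, ¬(gg e c = true) ∧ ¬(gg e' c = true) := by decide
theorem hB1 : ∀ c, ∃ e, gb e = true ∧ gg e c = true := by decide
theorem hB2 : ∀ c, ∃ e, ¬(gb e = true) ∧ ¬(gg e c = true) := by decide
theorem hB3 : ∀ c c', ∃ e, gg e c = true ∧ gg e c' = true := by decide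
theorem hB4 : ∀ c c', ∃ e, ¬(gg e c = true) ∧ ¬(gg e c' = true) := by decide

/-- The extended vertex set: original vertices plus 7 extra A-side and 7 extra
B-side vertices. -/
abbrev Vext (V : Type) := V ⊕ (Fin 7 ⊕ Fin 7)

/-- A-side predicate. -/
def pA {V : Type} (A : Set V) : Vext V → Prop
  | .inl v => v ∈ A
  | .inr (.inl _) => True
  | .inr (.inr _) => False

/-- Base bipartite relation (meaningful from an A-side vertex to a B-side one). -/
def Krel {V : Type} (G : SimpleGraph V) : Vext V → Vext V → Prop
  | .inl u, .inl v => G.Adj u v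
  | .inl _, .inr (.inr c) => ga c = true
  | .inr (.inl e), .inl _ => gb e = true
  | .inr (.inl e), .inr (.inr c) => gg e c = true
  | _, _ => False

/-- Circulant block table for the 4 copies. -/
def tbl : ℕ → ℕ → Prop → Prop
  | 0, 0, b => b
  | 0, 1, _ => True
  | 0, 2, b => b
  | 0, 3, _ => False
  | 1, 0, _ => True
  | 1, 1, b => ¬b
  | 1, 2, _ => False
  | 1, 3, b => ¬b
  | 2, 0, b => b
  | 2, 1, _ => False
  | 2, 2, b => b
  | 2, 3, _ => True
  | 3, 0, _ => False
  | 3, 1, b => ¬b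
  | 3, 2, _ => True
  | 3, 3, b => ¬b
  | _, _, _ => False

def T (r s : Fin 4) (b : Prop) : Prop := tbl r.val s.val b

theorem T_compl : ∀ (r s : Fin 4) (b : Prop), T (r + 1) (s + 1) b ↔ ¬ T r s b := by
  intro r s b
  fin_cases r <;> fin_cases s <;>
    first
      | exact Iff.rfl
      | exact not_not.symm
      | exact iff_of_true trivial not_false
      | exact iff_of_false id (not_not_intro trivial)

/-- The big squco graph. -/
def HH {V : Type} (G : SimpleGraph V) (A : Set V) :
    SimpleGraph (Vext V × Fin 4) where
  Adj w w' := (pA A w.1 ∧ ¬ pA A w'.1 ∧ T w.2 w'.2 (Krel G w.1 w'.1)) ∨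
              (pA A w'.1 ∧ ¬ pA A w.1 ∧ T w'.2 w.2 (Krel G w'.1 w.1))
  symm := ⟨fun w w' h => h.symm⟩
  loopless := ⟨fun w h => by
    rcases h with ⟨h1, h2, _⟩ | ⟨h1, h2, _⟩ <;> exact h2 h1⟩

section Lemmas

variable {V : Type} (G : SimpleGraph V) (A : Set V)

theorem CN_A : ∀ x x', pA A x → pA A x' →
    ∃ y, ¬ pA A y ∧ Krel G x y ∧ Krel G x' y := by
  rintro (u | e | c) (u' | e' | c') hx hx'
  · exact ⟨.inr (.inr 0), fun h => h, (by decide : ga (0 : Fin 7) = true),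
      (by decide : ga (0 : Fin 7) = true)⟩
  · obtain ⟨c, h1, h2⟩ := hA1 e'
    exact ⟨.inr (.inr c), fun h => h, h1, h2⟩
  · exact hx'.elim
  · obtain ⟨c, h1, h2⟩ := hA1 e
    exact ⟨.inr (.inr c), fun h => h, h2, h1⟩
  · obtain ⟨c, h1, h2⟩ := hA3 e e'
    exact ⟨.inr (.inr c), fun h => h, h1, h2⟩
  · exact hx'.elim
  · exact hx.elim
  · exact hx.elim
  · exact hx.elim

theorem CZ_A : ∀ x x', pA A x → pA A x' →
    ∃ y, ¬ pA A y ∧ ¬ Krel G x y ∧ ¬ Krel G x' y := by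
  rintro (u | e | c) (u' | e' | c') hx hx'
  · exact ⟨.inr (.inr 3), fun h => h, (by decide : ¬ ga (3 : Fin 7) = true),
      (by decide : ¬ ga (3 : Fin 7) = true)⟩
  · obtain ⟨c, h1, h2⟩ := hA2 e'
    exact ⟨.inr (.inr c), fun h => h, h1, h2⟩
  · exact hx'.elim
  · obtain ⟨c, h1, h2⟩ := hA2 e
    exact ⟨.inr (.inr c), fun h => h, h2, h1⟩
  · obtain ⟨c, h1, h2⟩ := hA4 e e'
    exact ⟨.inr (.inr c), fun h => h, h1, h2⟩
  · exact hx'.elim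
  · exact hx.elim
  · exact hx.elim
  · exact hx.elim

theorem CN_B : ∀ y y', ¬ pA A y → ¬ pA A y' →
    ∃ x, pA A x ∧ Krel G x y ∧ Krel G x y' := by
  rintro (v | e | c) (v' | e' | c') hy hy'
  · exact ⟨.inr (.inl 0), trivial, (by decide : gb (0 : Fin 7) = true),
      (by decide : gb (0 : Fin 7) = true)⟩
  · exact (hy' trivial).elim
  · obtain ⟨e, h1, h2⟩ := hB1 c'
    exact ⟨.inr (.inl e), trivial, h1, h2⟩
  · exact (hy trivial).elim
  · exact (hy trivial).elim
  · exact (hy trivial).elim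
  · obtain ⟨e, h1, h2⟩ := hB1 c
    exact ⟨.inr (.inl e), trivial, h2, h1⟩
  · exact (hy' trivial).elim
  · obtain ⟨e, h1, h2⟩ := hB3 c c'
    exact ⟨.inr (.inl e), trivial, h1, h2⟩

theorem CZ_B : ∀ y y', ¬ pA A y → ¬ pA A y' →
    ∃ x, pA A x ∧ ¬ Krel G x y ∧ ¬ Krel G x y' := by
  rintro (v | e | c) (v' | e' | c') hy hy'
  · exact ⟨.inr (.inl 3), trivial, (by decide : ¬ gb (3 : Fin 7) = true),
      (by decide : ¬ gb (3 : Fin 7) = true)⟩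
  · exact (hy' trivial).elim
  · obtain ⟨e, h1, h2⟩ := hB2 c'
    exact ⟨.inr (.inl e), trivial, h1, h2⟩
  · exact (hy trivial).elim
  · exact (hy trivial).elim
  · exact (hy trivial).elim
  · obtain ⟨e, h1, h2⟩ := hB2 c
    exact ⟨.inr (.inl e), trivial, h2, h1⟩
  · exact (hy' trivial).elim
  · obtain ⟨e, h1, h2⟩ := hB4 c c'
    exact ⟨.inr (.inl e), trivial, h1, h2⟩

theorem P_A (x x' : Vext V) (hx : pA A x) (hx' : pA A x') (r r' : Fin 4) :
    ∃ z, (HH G A).Adj (x, r) z ∧ (HH G A).Adj (x', r') z := by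
  obtain ⟨y0, hy0, k0, k0'⟩ := CN_A G A x x' hx hx'
  obtain ⟨y1, hy1, k1, -⟩ := CN_A G A x x hx hx
  obtain ⟨y2, hy2, k2, -⟩ := CN_A G A x' x' hx' hx'
  obtain ⟨z0, hz0, n0, n0'⟩ := CZ_A G A x x' hx hx'
  obtain ⟨z1, hz1, n1, -⟩ := CZ_A G A x x hx hx
  fin_cases r <;> fin_cases r'
  · exact ⟨(y0, 1), Or.inl ⟨hx, hy0, True.intro⟩, Or.inl ⟨hx', hy0, True.intro⟩⟩
  · exact ⟨(y1, 0), Or.inl ⟨hx, hy1, k1⟩, Or.inl ⟨hx', hy1, True.intro⟩⟩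
  · exact ⟨(y0, 0), Or.inl ⟨hx, hy0, k0⟩, Or.inl ⟨hx', hy0, k0'⟩⟩
  · exact ⟨(y1, 2), Or.inl ⟨hx, hy1, k1⟩, Or.inl ⟨hx', hy1, True.intro⟩⟩
  · exact ⟨(y2, 0), Or.inl ⟨hx, hy2, True.intro⟩, Or.inl ⟨hx', hy2, k2⟩⟩
  · exact ⟨(y0, 0), Or.inl ⟨hx, hy0, True.intro⟩, Or.inl ⟨hx', hy0, True.intro⟩⟩
  · exact ⟨(z1, 3), Or.inl ⟨hx, hz1, n1⟩, Or.inl ⟨hx', hz1, True.intro⟩⟩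
  · exact ⟨(z0, 1), Or.inl ⟨hx, hz0, n0⟩, Or.inl ⟨hx', hz0, n0'⟩⟩
  · exact ⟨(y0, 0), Or.inl ⟨hx, hy0, k0⟩, Or.inl ⟨hx', hy0, k0'⟩⟩
  · exact ⟨(y1, 0), Or.inl ⟨hx, hy1, k1⟩, Or.inl ⟨hx', hy1, True.intro⟩⟩
  · exact ⟨(y0, 0), Or.inl ⟨hx, hy0, k0⟩, Or.inl ⟨hx', hy0, k0'⟩⟩
  · exact ⟨(y1, 2), Or.inl ⟨hx, hy1, k1⟩, Or.inl ⟨hx', hy1, True.intro⟩⟩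
  · exact ⟨(y2, 2), Or.inl ⟨hx, hy2, True.intro⟩, Or.inl ⟨hx', hy2, k2⟩⟩
  · exact ⟨(z0, 1), Or.inl ⟨hx, hz0, n0⟩, Or.inl ⟨hx', hz0, n0'⟩⟩
  · exact ⟨(y2, 2), Or.inl ⟨hx, hy2, True.intro⟩, Or.inl ⟨hx', hy2, k2⟩⟩
  · exact ⟨(z0, 1), Or.inl ⟨hx, hz0, n0⟩, Or.inl ⟨hx', hz0, n0'⟩⟩

theorem P_B (y y' : Vext V) (hy : ¬ pA A y) (hy' : ¬ pA A y') (s s' : Fin 4) :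
    ∃ z, (HH G A).Adj (y, s) z ∧ (HH G A).Adj (y', s') z := by
  obtain ⟨x0, hx0, k0, k0'⟩ := CN_B G A y y' hy hy'
  obtain ⟨x1, hx1, k1, -⟩ := CN_B G A y y hy hy
  obtain ⟨x2, hx2, k2, -⟩ := CN_B G A y' y' hy' hy'
  obtain ⟨w0, hw0, n0, n0'⟩ := CZ_B G A y y' hy hy'
  obtain ⟨w1, hw1, n1, -⟩ := CZ_B G A y y hy hy
  fin_cases s <;> fin_cases s'
  · exact ⟨(x0, 1), Or.inr ⟨hx0, hy, True.intro⟩, Or.inr ⟨hx0, hy', True.intro⟩⟩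
  · exact ⟨(x1, 0), Or.inr ⟨hx1, hy, k1⟩, Or.inr ⟨hx1, hy', True.intro⟩⟩
  · exact ⟨(x0, 0), Or.inr ⟨hx0, hy, k0⟩, Or.inr ⟨hx0, hy', k0'⟩⟩
  · exact ⟨(x1, 2), Or.inr ⟨hx1, hy, k1⟩, Or.inr ⟨hx1, hy', True.intro⟩⟩
  · exact ⟨(x2, 0), Or.inr ⟨hx2, hy, True.intro⟩, Or.inr ⟨hx2, hy', k2⟩⟩
  · exact ⟨(x0, 0), Or.inr ⟨hx0, hy, True.intro⟩, Or.inr ⟨hx0, hy', True.intro⟩⟩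
  · exact ⟨(w1, 3), Or.inr ⟨hw1, hy, n1⟩, Or.inr ⟨hw1, hy', True.intro⟩⟩
  · exact ⟨(w0, 1), Or.inr ⟨hw0, hy, n0⟩, Or.inr ⟨hw0, hy', n0'⟩⟩
  · exact ⟨(x0, 0), Or.inr ⟨hx0, hy, k0⟩, Or.inr ⟨hx0, hy', k0'⟩⟩
  · exact ⟨(x1, 0), Or.inr ⟨hx1, hy, k1⟩, Or.inr ⟨hx1, hy', True.intro⟩⟩
  · exact ⟨(x0, 0), Or.inr ⟨hx0, hy, k0⟩, Or.inr ⟨hx0, hy', k0'⟩⟩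
  · exact ⟨(x1, 2), Or.inr ⟨hx1, hy, k1⟩, Or.inr ⟨hx1, hy', True.intro⟩⟩
  · exact ⟨(x2, 2), Or.inr ⟨hx2, hy, True.intro⟩, Or.inr ⟨hx2, hy', k2⟩⟩
  · exact ⟨(w0, 1), Or.inr ⟨hw0, hy, n0⟩, Or.inr ⟨hw0, hy', n0'⟩⟩
  · exact ⟨(x2, 2), Or.inr ⟨hx2, hy, True.intro⟩, Or.inr ⟨hx2, hy', k2⟩⟩
  · exact ⟨(w0, 1), Or.inr ⟨hw0, hy, n0⟩, Or.inr ⟨hw0, hy', n0'⟩⟩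

theorem main (a b : Vext V × Fin 4) :
    (HH G A)ᶜ.Adj (a.1, a.2 + 1) (b.1, b.2 + 1) ↔ (HH G A).square.Adj a b := by
  obtain ⟨x, r⟩ := a
  obtain ⟨y, s⟩ := b
  rw [SimpleGraph.compl_adj]
  have hne : ((x, r + 1) : Vext V × Fin 4) = (y, s + 1) ↔ (x, r) = (y, s) := by
    simp [Prod.ext_iff]
  show _ ↔ (x, r) ≠ (y, s) ∧
      ((HH G A).Adj (x, r) (y, s) ∨
        ∃ w, (HH G A).Adj (x, r) w ∧ (HH G A).Adj w (y, s))
  by_cases hx : pA A x <;> by_cases hy : pA A y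
  · -- both A-side
    have noadj : ∀ r' s' : Fin 4, ¬ (HH G A).Adj (x, r') (y, s') := by
      rintro r' s' (⟨_, h, _⟩ | ⟨_, h, _⟩)
      · exact h hy
      · exact h hx
    constructor
    · rintro ⟨h1, -⟩
      obtain ⟨z, hz1, hz2⟩ := P_A G A x y hx hy r s
      exact ⟨fun h => h1 (hne.mpr h), Or.inr ⟨z, hz1, hz2.symm⟩⟩
    · rintro ⟨h1, -⟩
      exact ⟨fun h => h1 (hne.mp h), noadj _ _⟩
  · -- x A-side, y B-side
    have hxy : x ≠ y := fun h => hy (h ▸ hx)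
    have adj_iff : ∀ r' s' : Fin 4,
        (HH G A).Adj (x, r') (y, s') ↔ T r' s' (Krel G x y) := by
      intro r' s'
      constructor
      · rintro (⟨_, _, h⟩ | ⟨h, _, _⟩)
        · exact h
        · exact (hy h).elim
      · intro h
        exact Or.inl ⟨hx, hy, h⟩
    have nocommon : ¬ ∃ w, (HH G A).Adj (x, r) w ∧ (HH G A).Adj w (y, s) := by
      rintro ⟨⟨v, t⟩, h1, h2⟩
      rcases h1 with ⟨-, hv, -⟩ | ⟨-, hxc, -⟩
      · rcases h2 with ⟨hv', -, -⟩ | ⟨hy', -, -⟩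
        · exact hv hv'
        · exact hy hy'
      · exact hxc hx
    constructor
    · rintro ⟨-, hna⟩
      have hnT : ¬ T (r + 1) (s + 1) (Krel G x y) :=
        fun h => hna ((adj_iff _ _).mpr h)
      have hT : T r s (Krel G x y) := by
        by_contra h
        exact hnT ((T_compl r s _).mpr h)
      exact ⟨fun h => hxy (congrArg Prod.fst h), Or.inl ((adj_iff r s).mpr hT)⟩
    · rintro ⟨-, h⟩
      have hT : T r s (Krel G x y) := by
        rcases h with h | ⟨w, h1, h2⟩
        · exact (adj_iff r s).mp h
        · exact (nocommon ⟨w, h1, h2⟩).elim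
      refine ⟨fun hh => hxy (congrArg Prod.fst hh), fun ha => ?_⟩
      exact (T_compl r s _).mp ((adj_iff _ _).mp ha) hT
  · -- x B-side, y A-side
    have hxy : x ≠ y := fun h => hx (h ▸ hy)
    have adj_iff : ∀ r' s' : Fin 4,
        (HH G A).Adj (x, r') (y, s') ↔ T s' r' (Krel G y x) := by
      intro r' s'
      constructor
      · rintro (⟨h, _, _⟩ | ⟨_, _, h⟩)
        · exact (hx h).elim
        · exact h
      · intro h
        exact Or.inr ⟨hy, hx, h⟩
    have nocommon : ¬ ∃ w, (HH G A).Adj (x, r) w ∧ (HH G A).Adj w (y, s) := by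
      rintro ⟨⟨v, t⟩, h1, h2⟩
      rcases h1 with ⟨hxc, -, -⟩ | ⟨hv, -, -⟩
      · exact hx hxc
      · rcases h2 with ⟨-, hyc, -⟩ | ⟨-, hv', -⟩
        · exact hyc hy
        · exact hv' hv
    constructor
    · rintro ⟨-, hna⟩
      have hnT : ¬ T (s + 1) (r + 1) (Krel G y x) :=
        fun h => hna ((adj_iff _ _).mpr h)
      have hT : T s r (Krel G y x) := by
        by_contra h
        exact hnT ((T_compl s r _).mpr h)
      exact ⟨fun h => hxy (congrArg Prod.fst h), Or.inl ((adj_iff r s).mpr hT)⟩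
    · rintro ⟨-, h⟩
      have hT : T s r (Krel G y x) := by
        rcases h with h | ⟨w, h1, h2⟩
        · exact (adj_iff r s).mp h
        · exact (nocommon ⟨w, h1, h2⟩).elim
      refine ⟨fun hh => hxy (congrArg Prod.fst hh), fun ha => ?_⟩
      exact (T_compl s r _).mp ((adj_iff _ _).mp ha) hT
  · -- both B-side
    have noadj : ∀ r' s' : Fin 4, ¬ (HH G A).Adj (x, r') (y, s') := by
      rintro r' s' (⟨h, _, _⟩ | ⟨h, _, _⟩)
      · exact hx h
      · exact hy h
    constructor
    · rintro ⟨h1, -⟩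
      obtain ⟨z, hz1, hz2⟩ := P_B G A x y hx hy r s
      exact ⟨fun h => h1 (hne.mpr h), Or.inr ⟨z, hz1, hz2.symm⟩⟩
    · rintro ⟨h1, -⟩
      exact ⟨fun h => h1 (hne.mp h), noadj _ _⟩

end Lemmas

end SqucoAux

/-- Every bipartite graph is an induced subgraph of a bipartite
square-complementary graph. -/
theorem bipartite_induced_subgraph_of_squco (V : Type) [Fintype V] (G : SimpleGraph V)
    (A B : Set V) (hbip : G.IsBipartitionOf A B) :
    ∃ (W : Type) (_ : Fintype W) (H : SimpleGraph W) (A' B' : Set W) (f : V ↪ W),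
      H.IsBipartitionOf A' B' ∧ H.IsSquco ∧
      ∀ u v : V, H.Adj (f u) (f v) ↔ G.Adj u v := by
  classical
  refine ⟨SqucoAux.Vext V × Fin 4, inferInstance, SqucoAux.HH G A,
    {w | SqucoAux.pA A w.1}, {w | ¬ SqucoAux.pA A w.1},
    ⟨fun v => (Sum.inl v, 0), ?_⟩, ⟨?_, ?_⟩, ?_, ?_⟩
  · intro u v h
    exact Sum.inl.inj (congrArg Prod.fst h)
  · intro w
    exact not_not.symm
  · rintro u v (⟨h1, h2, -⟩ | ⟨h1, h2, -⟩)
    · exact Or.inl ⟨h1, h2⟩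
    · exact Or.inr ⟨h2, h1⟩
  · refine ⟨⟨⟨fun w => (w.1, w.2 + 1), fun w => (w.1, w.2 - 1), ?_, ?_⟩, ?_⟩⟩
    · intro w; simp
    · intro w; simp
    · intro a b
      exact SqucoAux.main G A a b
  · intro u v
    constructor
    · rintro (⟨-, -, h⟩ | ⟨-, -, h⟩)
      · exact h
      · exact h.symm
    · intro h
      rcases hbip.2 h with ⟨hu, hv⟩ | ⟨hu, hv⟩
      · exact Or.inl ⟨hu, fun hv' => (hbip.1 v).mp hv' hv, h⟩
      · exact Or.inr ⟨hv, fun hu' => (hbip.1 u).mp hu' hu, h.symm⟩
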